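/- For n ≥ 4 with n even and 2 ≤ k ≤ n-2 with k odd, the subgroup ⟨r_n, r_{n-1}, r_k⟩ of Sym_n preserves the partition of {1,...,n} into odd positions B_1 and even positions B_2 (each generator either fixes both blocks or swaps them); hence it is a proper subgroup of Sym_n. -/

import Mathlib

/-- The prefix reversal `r i` on positions `1..n` (0-indexed as `Fin n`):
position `x+1 ↦ i+1-(x+1)` for `x+1 ≤ i`, i.e. `x ↦ i-1-x` for `x < i`, fixing the rest. -/
def pr (n i : ℕ) : Equiv.Perm (Fin n) :=
  Function.Involutive.toPerm
    (fun x => if h : x.val < i ∧ i ≤ n then ⟨i - 1 - x.val, by omega⟩ else x)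
    (by
      intro x
      apply Fin.ext
      dsimp only
      split_ifs with h1 h2 h3 <;> simp_all <;> omega)

lemma pr_apply (n i : ℕ) (x : Fin n) :
    (pr n i x).val = if x.val < i ∧ i ≤ n then i - 1 - x.val else x.val := by
  simp only [pr, Function.Involutive.coe_toPerm]
  split_ifs with h <;> simp [Function.Involutive.toPerm, h]

theorem stmt18 (n k : ℕ) (hn : 4 ≤ n) (hne : Even n) (hk1 : 2 ≤ k) (hk2 : k ≤ n - 2)
    (hko : Odd k) :
    (∀ g ∈ Subgroup.closure ({pr n n, pr n (n - 1), pr n k} : Set (Equiv.Perm (Fin n))),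
      (∀ x : Fin n, ((g x).val + 1) % 2 = (x.val + 1) % 2) ∨
      (∀ x : Fin n, ((g x).val + 1) % 2 = x.val % 2)) ∧
    Subgroup.closure ({pr n n, pr n (n - 1), pr n k} : Set (Equiv.Perm (Fin n))) ≠ ⊤ := by
  rw [Nat.even_iff] at hne
  rw [Nat.odd_iff] at hko
  have main : ∀ g ∈ Subgroup.closure ({pr n n, pr n (n - 1), pr n k} : Set (Equiv.Perm (Fin n))),
      (∀ x : Fin n, ((g x).val + 1) % 2 = (x.val + 1) % 2) ∨
      (∀ x : Fin n, ((g x).val + 1) % 2 = x.val % 2) := by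
    intro g hg
    induction hg using Subgroup.closure_induction with
    | mem x hx =>
      rcases hx with h | h | h
      · right
        intro z
        subst h
        have hz := z.isLt
        rw [pr_apply]
        rw [if_pos ⟨hz, le_refl n⟩]
        omega
      · left
        intro z
        subst h
        have hz := z.isLt
        rw [pr_apply]
        split_ifs with h' <;> omega
      · left
        intro z
        subst h
        have hz := z.isLt
        rw [pr_apply]
        split_ifs with h' <;> omega
    | one => left; intro z; rfl
    | mul a b _ _ ha hb =>
      rcases ha with ha | ha <;> rcases hb with hb | hb
      · left; intro z
        have h1 := ha (b z); have h2 := hb z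
        simp only [Equiv.Perm.mul_apply]
        omega
      · right; intro z
        have h1 := ha (b z); have h2 := hb z
        have := ((a : Equiv.Perm (Fin n)) (b z)).isLt
        simp only [Equiv.Perm.mul_apply]
        omega
      · right; intro z
        have h1 := ha (b z); have h2 := hb z
        have := (b z).isLt
        simp only [Equiv.Perm.mul_apply]
        omega
      · left; intro z
        have h1 := ha (b z); have h2 := hb z
        have := (b z).isLt
        simp only [Equiv.Perm.mul_apply]
        omega
    | inv a _ ha =>
      rcases ha with ha | ha
      · left; intro z
        have h1 := ha (a⁻¹ z)
        rw [← (Equiv.Perm.inv_eq_iff_eq (f := a) (x := z)).mp rfl] at h1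
        omega
      · right; intro z
        have h1 := ha (a⁻¹ z)
        rw [← (Equiv.Perm.inv_eq_iff_eq (f := a) (x := z)).mp rfl] at h1
        have := (a⁻¹ z).isLt
        have := z.isLt
        omega
  refine ⟨main, ?_⟩
  intro htop
  have hn0 : (0 : ℕ) < n := by omega
  have hn1 : (1 : ℕ) < n := by omega
  have hn2 : (2 : ℕ) < n := by omega
  have hsmem : Equiv.swap (⟨0, hn0⟩ : Fin n) ⟨1, hn1⟩ ∈
      Subgroup.closure ({pr n n, pr n (n - 1), pr n k} : Set (Equiv.Perm (Fin n))) := by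
    rw [htop]; exact Subgroup.mem_top _
  have h0 : Equiv.swap (⟨0, hn0⟩ : Fin n) ⟨1, hn1⟩ ⟨0, hn0⟩ = ⟨1, hn1⟩ :=
    Equiv.swap_apply_left _ _
  have h2 : Equiv.swap (⟨0, hn0⟩ : Fin n) ⟨1, hn1⟩ ⟨2, hn2⟩ = ⟨2, hn2⟩ := by
    apply Equiv.swap_apply_of_ne_of_ne <;> simp [Fin.ext_iff]
  rcases main _ hsmem with h | h
  · have := h ⟨0, hn0⟩
    rw [h0] at this
    simp only [Fin.val_mk] at this
    omega
  · have := h ⟨2, hn2⟩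
    rw [h2] at this
    simp only [Fin.val_mk] at this
    omega
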